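/- arXiv:1804.02026 — 7 statements merged into one kernel-verified Lean document; each statement's English description precedes it below -/
import Mathlib

section
/- Let H be a complex Hilbert space and (aₙ)ₙ a bounded sequence in L(H) with Re⟨aₙ x, x⟩ ≥ c‖x‖² for all n and all x, for some c > 0. If aₙ⁻¹ → b in the weak operator topology for some b ∈ L(H), then b is boundedly invertible, ‖b⁻¹‖ ≤ (supₙ‖aₙ‖²)/c, and Re⟨b⁻¹ y, y⟩ ≥ c‖y‖² for all y. -/
open scoped InnerProductSpace
open Filter

/-- If `(aₙ)` is bounded with `Re aₙ ≥ c > 0` and the inverses `aₙ⁻¹` converge to `b` in the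
weak operator topology, then `b` is boundedly invertible with `‖b⁻¹‖ ≤ (supₙ ‖aₙ‖)²/c` and
`Re b⁻¹ ≥ c`. -/
theorem stmt5 {H : Type*} [NormedAddCommGroup H] [InnerProductSpace ℂ H] [CompleteSpace H]
    (a ainv : ℕ → H →L[ℂ] H) (b : H →L[ℂ] H) (c : ℝ) (hc : 0 < c)
    (hbdd : BddAbove (Set.range fun n => ‖a n‖))
    (hcoer : ∀ n, ∀ x : H, c * ‖x‖ ^ 2 ≤ (⟪a n x, x⟫_ℂ).re)
    (hinv : ∀ n, a n * ainv n = 1 ∧ ainv n * a n = 1)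
    (hconv : ∀ x y : H, Tendsto (fun n => ⟪ainv n x, y⟫_ℂ) atTop (nhds ⟪b x, y⟫_ℂ)) :
    IsUnit b ∧ ‖Ring.inverse b‖ ≤ (⨆ n, ‖a n‖) ^ 2 / c ∧
      ∀ y : H, c * ‖y‖ ^ 2 ≤ (⟪Ring.inverse b y, y⟫_ℂ).re := by
  set M : ℝ := ⨆ n, ‖a n‖ with hMdef
  have hM : ∀ n, ‖a n‖ ≤ M := fun n => le_ciSup hbdd n
  have hM0 : 0 ≤ M := (norm_nonneg (a 0)).trans (hM 0)
  have hre_symm : ∀ x y : H, (⟪x, y⟫_ℂ).re = (⟪y, x⟫_ℂ).re := by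
    intro x y; rw [← inner_conj_symm]; exact Complex.conj_re _
  have hCS : ∀ x y : H, (⟪x, y⟫_ℂ).re ≤ ‖x‖ * ‖y‖ := by
    intro x y; rw [← RCLike.re_to_complex]; exact re_inner_le_norm x y
  have hselfre : ∀ x : H, (⟪x, x⟫_ℂ).re = ‖x‖ ^ 2 := by
    intro x; rw [← RCLike.re_to_complex, inner_self_eq_norm_sq]
  -- limits of real parts
  have hretend : ∀ x y : H,
      Tendsto (fun n => (⟪ainv n x, y⟫_ℂ).re) atTop (nhds (⟪b x, y⟫_ℂ).re) := by
    intro x y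
    exact (Complex.continuous_re.tendsto _).comp (hconv x y)
  rcases subsingleton_or_nontrivial H with hsub | hnt
  · have hb1 : IsUnit b := isUnit_of_subsingleton b
    refine ⟨hb1, ?_, ?_⟩
    · have : Ring.inverse b = 0 := Subsingleton.elim _ _
      rw [this, norm_zero]
      positivity
    · intro y
      have hy : y = 0 := Subsingleton.elim _ _
      simp [hy]
  -- nontrivial case
  have hMpos : 0 < M := by
    obtain ⟨x, hx⟩ := exists_ne (0 : H)
    have hx' : 0 < ‖x‖ := norm_pos_iff.mpr hx
    have h1 := hcoer 0 x
    have h2 : (⟪a 0 x, x⟫_ℂ).re ≤ ‖a 0‖ * ‖x‖ * ‖x‖ :=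
      (hCS (a 0 x) x).trans
        (mul_le_mul_of_nonneg_right ((a 0).le_opNorm x) (norm_nonneg x))
    have h3 : c ≤ ‖a 0‖ := by nlinarith [mul_pos hx' hx']
    linarith [hM 0]
  -- basic identity: a n (ainv n y) = y
  have happ : ∀ n (y : H), a n (ainv n y) = y := by
    intro n y
    have := congrArg (fun f : H →L[ℂ] H => f y) (hinv n).1
    simpa using this
  -- core per-n coercivity of the inverses
  have hcore : ∀ n (y : H), c * ‖ainv n y‖ ^ 2 ≤ (⟪ainv n y, y⟫_ℂ).re := by
    intro n y
    have h1 := hcoer n (ainv n y)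
    rw [happ n y] at h1
    calc c * ‖ainv n y‖ ^ 2 ≤ (⟪y, ainv n y⟫_ℂ).re := by
          have := hcoer n (ainv n y); rw [happ n y] at this; exact this
      _ = (⟪ainv n y, y⟫_ℂ).re := hre_symm _ _
  -- norm comparison ‖y‖ ≤ M * ‖ainv n y‖
  have hnorm : ∀ n (y : H), ‖y‖ ≤ M * ‖ainv n y‖ := by
    intro n y
    conv_lhs => rw [← happ n y]
    exact ((a n).le_opNorm _).trans
      (mul_le_mul_of_nonneg_right (hM n) (norm_nonneg _))
  -- coercivity of b (division-free form)
  have hB2 : ∀ y : H, c * ‖y‖ ^ 2 ≤ M ^ 2 * (⟪b y, y⟫_ℂ).re := by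
    intro y
    have h : ∀ n, c * ‖y‖ ^ 2 ≤ M ^ 2 * (⟪ainv n y, y⟫_ℂ).re := by
      intro n
      have h1 := hcore n y
      have h2 := hnorm n y
      have h4 : ‖y‖ ^ 2 ≤ M ^ 2 * ‖ainv n y‖ ^ 2 := by
        nlinarith [norm_nonneg y, norm_nonneg (ainv n y)]
      have h5 : M ^ 2 * (c * ‖ainv n y‖ ^ 2) ≤ M ^ 2 * (⟪ainv n y, y⟫_ℂ).re :=
        mul_le_mul_of_nonneg_left h1 (sq_nonneg M)
      have h6 := mul_le_mul_of_nonneg_left h4 hc.le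
      nlinarith
    exact ge_of_tendsto' ((hretend y y).const_mul (M ^ 2)) h
  -- key inequality: c‖b y‖² ≤ Re⟪b y, y⟫
  have hA : ∀ y : H, c * ‖b y‖ ^ 2 ≤ (⟪b y, y⟫_ℂ).re := by
    intro y
    have hstep : ∀ n, 2 * c * (⟪ainv n y, b y⟫_ℂ).re ≤
        (⟪ainv n y, y⟫_ℂ).re + c * ‖b y‖ ^ 2 := by
      intro n
      have h1 := hCS (ainv n y) (b y)
      have h2 := hcore n y
      have h3 : 2 * c * (⟪ainv n y, b y⟫_ℂ).re ≤ 2 * c * (‖ainv n y‖ * ‖b y‖) :=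
        mul_le_mul_of_nonneg_left h1 (by linarith)
      nlinarith [mul_nonneg hc.le (sq_nonneg (‖ainv n y‖ - ‖b y‖))]
    have hf : Tendsto (fun n => 2 * c * (⟪ainv n y, b y⟫_ℂ).re) atTop
        (nhds (2 * c * ‖b y‖ ^ 2)) := by
      have := (hretend y (b y)).const_mul (2 * c)
      rwa [hselfre (b y)] at this
    have hg : Tendsto (fun n => (⟪ainv n y, y⟫_ℂ).re + c * ‖b y‖ ^ 2)
        atTop (nhds ((⟪b y, y⟫_ℂ).re + c * ‖b y‖ ^ 2)) :=
      (hretend y y).add_const _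
    have hlim := le_of_tendsto_of_tendsto' hf hg hstep
    linarith
  -- antilipschitz / injectivity
  have hlow : ∀ x : H, ‖x‖ ≤ M ^ 2 / c * ‖b x‖ := by
    intro x
    rcases eq_or_ne x 0 with rfl | hx
    · simp
    · have hx' : 0 < ‖x‖ := norm_pos_iff.mpr hx
      have h1 := hB2 x
      have h2 : (⟪b x, x⟫_ℂ).re ≤ ‖b x‖ * ‖x‖ := hCS _ _
      rw [div_mul_eq_mul_div, le_div_iff₀ hc]
      nlinarith [sq_nonneg M, norm_nonneg (b x)]
  have hanti : AntilipschitzWith (Real.toNNReal (M ^ 2 / c)) b := by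
    refine ContinuousLinearMap.antilipschitz_of_bound b fun x => ?_
    rw [Real.coe_toNNReal _ (by positivity)]
    exact hlow x
  have hinj : Function.Injective b := hanti.injective
  have hclosed : IsClosed (Set.range b) :=
    hanti.isClosed_range b.uniformContinuous
  have hclosed' : IsClosed ((LinearMap.range (b : H →ₗ[ℂ] H) : Submodule ℂ H) : Set H) := by
    simpa [LinearMap.coe_range] using hclosed
  haveI : CompleteSpace (LinearMap.range (b : H →ₗ[ℂ] H) : Submodule ℂ H) :=
    hclosed'.completeSpace_coe
  have horto : (LinearMap.range (b : H →ₗ[ℂ] H))ᗮ = ⊥ := by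
    rw [Submodule.eq_bot_iff]
    intro z hz
    have h0 : ⟪b z, z⟫_ℂ = 0 := by
      exact (Submodule.mem_orthogonal _ z).mp hz (b z) ⟨z, rfl⟩
    have := hB2 z
    rw [h0] at this
    simp at this
    have : ‖z‖ ^ 2 ≤ 0 := by nlinarith
    have : ‖z‖ = 0 := by nlinarith [norm_nonneg z]
    exact norm_eq_zero.mp this
  have hsurj : LinearMap.range (b : H →ₗ[ℂ] H) = ⊤ := Submodule.orthogonal_eq_bot_iff.mp horto
  have hker : LinearMap.ker (b : H →ₗ[ℂ] H) = ⊥ := LinearMap.ker_eq_bot.mpr hinj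
  let e : H ≃L[ℂ] H := ContinuousLinearEquiv.ofBijective b hker hsurj
  have he : ∀ x, e x = b x := fun x =>
    congrFun (ContinuousLinearEquiv.coeFn_ofBijective b hker hsurj) x
  have hbsymm : ∀ x, b (e.symm x) = x := by
    intro x
    rw [← he]; exact e.apply_symm_apply x
  have hsymmb : ∀ x, e.symm (b x) = x := by
    intro x
    rw [← he]; exact e.symm_apply_apply x
  let u : (H →L[ℂ] H)ˣ :=
    ⟨b, e.symm, by ext x; simpa using hbsymm x, by ext x; simpa using hsymmb x⟩
  have hbu : b = (u : H →L[ℂ] H) := rfl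
  have hunit : IsUnit b := ⟨u, rfl⟩
  have hRinv : Ring.inverse b = (e.symm : H →L[ℂ] H) := by
    rw [hbu, Ring.inverse_unit]; rfl
  refine ⟨hunit, ?_, ?_⟩
  · rw [hRinv]
    refine ContinuousLinearMap.opNorm_le_bound _ (by positivity) fun z => ?_
    have := hlow (e.symm z)
    rwa [hbsymm z] at this
  · intro y
    rw [hRinv]
    have h1 := hA (e.symm y)
    rw [hbsymm y] at h1
    calc c * ‖y‖ ^ 2 ≤ (⟪y, e.symm y⟫_ℂ).re := h1
      _ = (⟪(e.symm : H →L[ℂ] H) y, y⟫_ℂ).re := hre_symm _ _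
end

section
/- Let b : ℝ → ℂ be the 1-periodic extension of 𝟙_{(0,1/2)} + (1/2)·𝟙_{(1/2,1)} and define aₙ(x) := b(n x) on (0,1). Then, as multiplication operators on L²(0,1), aₙ → (3/4)·Id in the weak operator topology while aₙ⁻¹ → (3/2)·Id in the weak operator topology, and (3/2) ≠ (3/4)⁻¹. In particular, inversion is not continuous with respect to the weak operator topology on the set of operators a with Re a ≥ 1/2. -/
open MeasureTheory Filter
open Topology

/-- The 1-periodic extension of `𝟙_{(0,1/2)} + (1/2)·𝟙_{(1/2,1)}`. -/
noncomputable def bfun : ℝ → ℂ := fun x =>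
  (Set.Ioo (0 : ℝ) (1 / 2)).indicator (fun _ => (1 : ℂ)) (Int.fract x) +
    (Set.Ioo (1 / 2 : ℝ) 1).indicator (fun _ => (1 / 2 : ℂ)) (Int.fract x)

lemma measurable_bfun : Measurable bfun := by
  unfold bfun
  exact ((measurable_const.indicator measurableSet_Ioo).comp measurable_fract).add
    ((measurable_const.indicator measurableSet_Ioo).comp measurable_fract)

lemma bfun_mem1 {x : ℝ} (h : Int.fract x ∈ Set.Ioo (0:ℝ) (1/2)) : bfun x = 1 := by
  have h2 : Int.fract x ∉ Set.Ioo (1/2:ℝ) 1 := fun h' => absurd h.2 (not_lt.2 h'.1.le)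
  simp only [bfun]
  rw [Set.indicator_of_mem h, Set.indicator_of_notMem h2, add_zero]

lemma bfun_mem2 {x : ℝ} (h : Int.fract x ∈ Set.Ioo (1/2:ℝ) 1) : bfun x = 1/2 := by
  have h2 : Int.fract x ∉ Set.Ioo (0:ℝ) (1/2) := fun h' => absurd h'.2 (not_lt.2 h.1.le)
  simp only [bfun]
  rw [Set.indicator_of_mem h, Set.indicator_of_notMem h2, zero_add]

lemma bfun_tri (x : ℝ) : bfun x = 1 ∨ bfun x = 1/2 ∨ bfun x = 0 := by
  by_cases h1 : Int.fract x ∈ Set.Ioo (0:ℝ) (1/2)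
  · exact Or.inl (bfun_mem1 h1)
  by_cases h2 : Int.fract x ∈ Set.Ioo (1/2:ℝ) 1
  · exact Or.inr (Or.inl (bfun_mem2 h2))
  · exact Or.inr (Or.inr (by simp only [bfun]; rw [Set.indicator_of_notMem h1, Set.indicator_of_notMem h2, add_zero]))

lemma fract_shift {x : ℝ} (h0 : Int.fract x ≠ 0) (hh : Int.fract x ≠ 1/2) :
    (Int.fract x ∈ Set.Ioo (0:ℝ) (1/2) ∧ Int.fract (x + 1/2) ∈ Set.Ioo (1/2:ℝ) 1) ∨
    (Int.fract x ∈ Set.Ioo (1/2:ℝ) 1 ∧ Int.fract (x + 1/2) ∈ Set.Ioo (0:ℝ) (1/2)) := by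
  have hbase : Int.fract (x + 1/2) = Int.fract (Int.fract x + 1/2) := by
    conv_lhs => rw [← Int.floor_add_fract x, add_assoc, Int.fract_intCast_add]
  have ht0 : 0 ≤ Int.fract x := Int.fract_nonneg x
  have ht1 : Int.fract x < 1 := Int.fract_lt_one x
  rcases lt_or_gt_of_ne hh with hlt | hgt
  · left
    have hmem : Int.fract x ∈ Set.Ioo (0:ℝ) (1/2) := ⟨lt_of_le_of_ne ht0 (Ne.symm h0), hlt⟩
    refine ⟨hmem, ?_⟩
    rw [hbase, Int.fract_eq_self.2 ⟨by linarith, by linarith⟩]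
    exact ⟨by linarith [hmem.1, hmem.2], by linarith [hmem.1, hmem.2]⟩
  · right
    have hmem : Int.fract x ∈ Set.Ioo (1/2:ℝ) 1 := ⟨hgt, ht1⟩
    refine ⟨hmem, ?_⟩
    have : Int.fract x + 1/2 = (Int.fract x - 1/2) + 1 := by ring
    rw [hbase, this, Int.fract_add_one, Int.fract_eq_self.2 ⟨by linarith, by linarith⟩]
    exact ⟨by linarith [hmem.1, hmem.2], by linarith [hmem.1, hmem.2]⟩

lemma anti_b (x : ℝ) (h0 : Int.fract x ≠ 0) (hh : Int.fract x ≠ 1/2) :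
    bfun (x + 1/2) - 3/4 = -(bfun x - 3/4) := by
  rcases fract_shift h0 hh with ⟨h1, h2⟩ | ⟨h1, h2⟩
  · rw [bfun_mem2 h2, bfun_mem1 h1]; norm_num
  · rw [bfun_mem1 h2, bfun_mem2 h1]; norm_num

lemma anti_binv (x : ℝ) (h0 : Int.fract x ≠ 0) (hh : Int.fract x ≠ 1/2) :
    (bfun (x + 1/2))⁻¹ - 3/2 = -((bfun x)⁻¹ - 3/2) := by
  rcases fract_shift h0 hh with ⟨h1, h2⟩ | ⟨h1, h2⟩
  · rw [bfun_mem2 h2, bfun_mem1 h1]; norm_num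
  · rw [bfun_mem1 h2, bfun_mem2 h1]; norm_num

lemma bound_b (x : ℝ) : ‖bfun x - 3/4‖ ≤ 2 := by
  rcases bfun_tri x with h | h | h <;> rw [h] <;> norm_num

lemma bound_binv (x : ℝ) : ‖(bfun x)⁻¹ - 3/2‖ ≤ 2 := by
  rcases bfun_tri x with h | h | h <;> rw [h] <;> norm_num

lemma null_bad {n : ℕ} (hn : 1 ≤ n) :
    ∀ᵐ x : ℝ, Int.fract ((n:ℝ) * x) ≠ 0 ∧ Int.fract ((n:ℝ) * x) ≠ 1/2 := by
  have hn' : (n:ℝ) ≠ 0 := Nat.cast_ne_zero.2 (by omega)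
  have hsub : {x : ℝ | ¬(Int.fract ((n:ℝ) * x) ≠ 0 ∧ Int.fract ((n:ℝ) * x) ≠ 1/2)} ⊆
      Set.range (fun m : ℤ => (m:ℝ)/(2*n)) := by
    intro x hx
    simp only [Set.mem_setOf_eq, not_and_or, not_ne_iff] at hx
    have hfr : Int.fract ((n:ℝ) * x) = (n:ℝ) * x - ⌊(n:ℝ) * x⌋ := (Int.self_sub_floor _).symm
    rcases hx with h | h
    · refine ⟨2 * ⌊(n:ℝ) * x⌋, ?_⟩
      push_cast
      rw [hfr] at h
      field_simp
      linarith
    · refine ⟨2 * ⌊(n:ℝ) * x⌋ + 1, ?_⟩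
      push_cast
      rw [hfr] at h
      field_simp
      linarith
  have h0 : volume {x : ℝ | ¬(Int.fract ((n:ℝ) * x) ≠ 0 ∧ Int.fract ((n:ℝ) * x) ≠ 1/2)} = 0 :=
    measure_mono_null hsub ((Set.countable_range _).measure_zero volume)
  exact h0

lemma transL1 {H : ℝ → ℂ} (hH : Integrable H volume) :
    Tendsto (fun t : ℝ => ∫ x, ‖H (x + t) - H x‖) (𝓝 0) (𝓝 0) := by
  set H₁ : ℝ →₁[volume] ℂ := hH.toL1 H with hH₁
  have hmp : ∀ t : ℝ, MeasurePreserving (fun x : ℝ => x + t) volume volume :=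
    fun t => measurePreserving_add_right volume t
  set cm : ℝ → C(ℝ, ℝ) := fun t => ⟨fun x => x + t, by fun_prop⟩ with hcm_def
  have hcm : Continuous cm :=
    ContinuousMap.continuous_of_continuous_uncurry _ (continuous_snd.add continuous_fst)
  set L : ℝ → (ℝ →₁[volume] ℂ) := fun t => Lp.compMeasurePreserving (cm t) (hmp t) H₁ with hL_def
  have hL : Continuous L :=
    Continuous.compMeasurePreservingLp continuous_const hcm hmp ENNReal.one_ne_top
  have hnorm : Tendsto (fun t => ‖L t - L 0‖) (𝓝 0) (𝓝 0) := by
    have h' : Continuous fun t => ‖L t - L 0‖ := (hL.sub (continuous_const (y := L 0))).norm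
    have := h'.tendsto 0
    simpa using this
  have heq : ∀ t : ℝ, ∫ x, ‖H (x + t) - H x‖ = ‖L t - L 0‖ := by
    intro t
    rw [L1.norm_eq_integral_norm]
    refine integral_congr_ae ?_
    have e1 : (L t : ℝ → ℂ) =ᵐ[volume] fun x => H (x + t) := by
      refine (Lp.coeFn_compMeasurePreserving H₁ (hmp t)).trans ?_
      exact (hmp t).quasiMeasurePreserving.ae_eq_comp (hH.coeFn_toL1)
    have e0 : (L 0 : ℝ → ℂ) =ᵐ[volume] H := by
      refine (Lp.coeFn_compMeasurePreserving H₁ (hmp 0)).trans ?_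
      refine ((hmp 0).quasiMeasurePreserving.ae_eq_comp (hH.coeFn_toL1)).trans ?_
      filter_upwards with x
      simp
    filter_upwards [Lp.coeFn_sub (L t) (L 0), e1, e0] with x h1 h2 h3
    rw [h1]
    simp only [Pi.sub_apply, h2, h3]
  simp_rw [heq]
  exact hnorm

lemma key (φ : ℝ → ℂ) (hm : Measurable φ) (C : ℝ)
    (hb : ∀ x, ‖φ x‖ ≤ C)
    (hanti : ∀ x, Int.fract x ≠ 0 → Int.fract x ≠ 1/2 → φ (x + 1/2) = -φ x)
    (H : ℝ → ℂ) (hH : Integrable H volume) :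
    Tendsto (fun n : ℕ => ∫ x, φ ((n:ℝ) * x) * H x) atTop (𝓝 0) := by
  have hrate : Tendsto (fun n : ℕ => -(1 / (2 * (n:ℝ)))) atTop (𝓝 0) := by
    have h1 : Tendsto (fun n : ℕ => (2 * (n:ℝ))) atTop atTop :=
      (tendsto_natCast_atTop_atTop).const_mul_atTop two_pos
    have h2 := h1.inv_tendsto_atTop
    have h3 := h2.neg
    simp only [neg_zero] at h3
    simpa [one_div] using h3
  have hT : Tendsto (fun n : ℕ => ∫ x, ‖H (x + -(1 / (2 * (n:ℝ)))) - H x‖) atTop (𝓝 0) :=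
    (transL1 hH).comp hrate
  have hg := hT.const_mul (C / 2)
  rw [mul_zero] at hg
  refine squeeze_zero_norm' ?_ hg
  filter_upwards [eventually_ge_atTop 1] with n hn
  set c : ℝ := 1 / (2 * (n:ℝ)) with hc
  have hn0 : ((n:ℕ):ℝ) ≠ 0 := Nat.cast_ne_zero.2 (by omega)
  have hnc : (n:ℝ) * c = 1/2 := by rw [hc]; field_simp
  have hmn : Measurable fun x : ℝ => φ ((n:ℝ) * x) := hm.comp (measurable_const_mul _)
  have h1 : Integrable (fun x => φ ((n:ℝ)*x) * H x) volume :=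
    hH.bdd_mul hmn.aestronglyMeasurable (Filter.Eventually.of_forall fun x => hb _)
  have hH2 : Integrable (fun x => H (x + -c)) volume := hH.comp_add_right (-c)
  have h2 : Integrable (fun x => φ ((n:ℝ)*x) * H (x + -c)) volume :=
    hH2.bdd_mul hmn.aestronglyMeasurable (Filter.Eventually.of_forall fun x => hb _)
  have heq : ∫ x, φ ((n:ℝ)*x) * H (x + -c) = - ∫ x, φ ((n:ℝ)*x) * H x := by
    have e1 : ∫ x, φ ((n:ℝ)*x) * H (x + -c) = ∫ x, φ ((n:ℝ)*x + 1/2) * H x := by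
      calc ∫ x, φ ((n:ℝ)*x) * H (x + -c)
          = ∫ x, φ ((n:ℝ)*(x + c)) * H ((x + c) + -c) :=
            (integral_add_right_eq_self (fun y => φ ((n:ℝ)*y) * H (y + -c)) c).symm
        _ = ∫ x, φ ((n:ℝ)*x + 1/2) * H x := by
            congr 1; funext x; rw [mul_add, hnc, add_neg_cancel_right]
    have e2 : ∫ x, φ ((n:ℝ)*x + 1/2) * H x = ∫ x, (-(φ ((n:ℝ)*x))) * H x := by
      refine integral_congr_ae ?_
      filter_upwards [null_bad hn] with x hx
      rw [hanti _ hx.1 hx.2]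
    rw [e1, e2]
    simp only [neg_mul]
    exact integral_neg _
  have hdiff : ∫ x, φ ((n:ℝ)*x) * (H x - H (x + -c))
      = (∫ x, φ ((n:ℝ)*x) * H x) - ∫ x, φ ((n:ℝ)*x) * H (x + -c) := by
    simp_rw [mul_sub]
    exact integral_sub h1 h2
  have h2I : ∫ x, φ ((n:ℝ)*x) * (H x - H (x + -c)) = (2:ℂ) * ∫ x, φ ((n:ℝ)*x) * H x := by
    rw [hdiff, heq]; ring
  have hle : ∫ x, ‖φ ((n:ℝ)*x) * (H x - H (x + -c))‖ ≤ ∫ x, C * ‖H (x + -c) - H x‖ := by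
    refine integral_mono_of_nonneg (Filter.Eventually.of_forall fun x => norm_nonneg _)
      (((hH2.sub hH).norm).const_mul C) (Filter.Eventually.of_forall fun x => ?_)
    dsimp only
    rw [norm_mul]
    calc ‖φ ((n:ℝ)*x)‖ * ‖H x - H (x + -c)‖ ≤ C * ‖H x - H (x + -c)‖ :=
          mul_le_mul_of_nonneg_right (hb _) (norm_nonneg _)
      _ = C * ‖H (x + -c) - H x‖ := by rw [norm_sub_rev]
  calc ‖∫ x, φ ((n:ℝ)*x) * H x‖
      = (1/2) * ‖(2:ℂ) * ∫ x, φ ((n:ℝ)*x) * H x‖ := by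
        rw [norm_mul]
        simp only [Complex.norm_ofNat]
        ring
    _ = (1/2) * ‖∫ x, φ ((n:ℝ)*x) * (H x - H (x + -c))‖ := by rw [h2I]
    _ ≤ (1/2) * ∫ x, ‖φ ((n:ℝ)*x) * (H x - H (x + -c))‖ :=
        mul_le_mul_of_nonneg_left (norm_integral_le_integral_norm _) (by norm_num)
    _ ≤ (1/2) * ∫ x, C * ‖H (x + -c) - H x‖ := mul_le_mul_of_nonneg_left hle (by norm_num)
    _ = C/2 * ∫ x, ‖H (x + -c) - H x‖ := by rw [integral_const_mul]; ring

lemma wot (ψ : ℝ → ℂ) (hmψ : Measurable ψ) (m : ℂ) (C : ℝ)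
    (hb : ∀ x, ‖ψ x - m‖ ≤ C)
    (hanti : ∀ x, Int.fract x ≠ 0 → Int.fract x ≠ 1/2 → ψ (x + 1/2) - m = -(ψ x - m))
    (f g : Lp ℂ 2 (volume.restrict (Set.Ioo (0:ℝ) 1))) :
    Tendsto (fun n : ℕ => ∫ x, ψ ((n:ℝ) * x) * f x * (starRingEnd ℂ) (g x)
        ∂(volume.restrict (Set.Ioo (0:ℝ) 1))) atTop
      (𝓝 (m * ∫ x, f x * (starRingEnd ℂ) (g x) ∂(volume.restrict (Set.Ioo (0:ℝ) 1)))) := by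
  set h : ℝ → ℂ := fun x => (f : ℝ → ℂ) x * (starRingEnd ℂ) ((g : ℝ → ℂ) x) with hh
  have hInt : Integrable h (volume.restrict (Set.Ioo (0:ℝ) 1)) := by
    have h0 := L2.integrable_inner (𝕜 := ℂ) g f
    have e : (fun x => (inner ℂ ((g : ℝ → ℂ) x) ((f : ℝ → ℂ) x) : ℂ)) = h := by
      funext x
      simp [hh, RCLike.inner_apply, mul_comm]
    rwa [e] at h0
  have hH : Integrable ((Set.Ioo (0:ℝ) 1).indicator h) volume := by
    rw [integrable_indicator_iff measurableSet_Ioo]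
    exact hInt
  have hkey := key (fun x => ψ x - m) (hmψ.sub measurable_const) C hb hanti _ hH
  have hIψ : ∀ n : ℕ, Integrable (fun x => ψ ((n:ℝ)*x) * h x)
      (volume.restrict (Set.Ioo (0:ℝ) 1)) := fun n =>
    hInt.bdd_mul ((hmψ.comp (measurable_const_mul _)).aestronglyMeasurable)
      (c := C + ‖m‖) (Filter.Eventually.of_forall fun x => by
        have e : ψ ((n:ℝ)*x) = (ψ ((n:ℝ)*x) - m) + m := by ring
        rw [e]
        exact (norm_add_le _ _).trans (add_le_add (hb _) le_rfl))
  have hrw : ∀ n : ℕ, ∫ x, (ψ ((n:ℝ)*x) - m) * (Set.Ioo (0:ℝ) 1).indicator h x ∂volume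
      = (∫ x, ψ ((n:ℝ)*x) * h x ∂(volume.restrict (Set.Ioo (0:ℝ) 1)))
        - m * ∫ x, h x ∂(volume.restrict (Set.Ioo (0:ℝ) 1)) := by
    intro n
    have e : ∀ x, (ψ ((n:ℝ)*x) - m) * (Set.Ioo (0:ℝ) 1).indicator h x
        = (Set.Ioo (0:ℝ) 1).indicator (fun x => (ψ ((n:ℝ)*x) - m) * h x) x := by
      intro x
      by_cases hx : x ∈ Set.Ioo (0:ℝ) 1 <;>
        simp [Set.indicator_of_mem, Set.indicator_of_notMem, hx]
    simp_rw [e]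
    rw [integral_indicator measurableSet_Ioo]
    simp_rw [sub_mul]
    rw [integral_sub (hIψ n) (hInt.const_mul m), integral_const_mul]
  have final : Tendsto (fun n : ℕ =>
      (∫ x, (ψ ((n:ℝ)*x) - m) * (Set.Ioo (0:ℝ) 1).indicator h x ∂volume)
        + m * ∫ x, h x ∂(volume.restrict (Set.Ioo (0:ℝ) 1)))
      atTop (𝓝 (m * ∫ x, h x ∂(volume.restrict (Set.Ioo (0:ℝ) 1)))) := by
    have := hkey.add
      (tendsto_const_nhds (x := m * ∫ x, h x ∂(volume.restrict (Set.Ioo (0:ℝ) 1))))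
    simpa using this
  have goal_eq : ∀ n : ℕ,
      (∫ x, (ψ ((n:ℝ)*x) - m) * (Set.Ioo (0:ℝ) 1).indicator h x ∂volume)
        + m * ∫ x, h x ∂(volume.restrict (Set.Ioo (0:ℝ) 1))
      = ∫ x, ψ ((n:ℝ) * x) * f x * (starRingEnd ℂ) (g x)
          ∂(volume.restrict (Set.Ioo (0:ℝ) 1)) := by
    intro n
    rw [hrw n]
    simp_rw [mul_assoc]
    ring
  exact final.congr goal_eq

/-- The multiplication operators by `x ↦ b(nx)` on `L²(0,1)` converge to `(3/4)·Id` in the weak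
operator topology, while their inverses converge to `(3/2)·Id ≠ ((3/4)·Id)⁻¹`; hence inversion is
not weak-operator continuous. -/
theorem stmt6 :
    (∀ f g : Lp ℂ 2 (volume.restrict (Set.Ioo (0 : ℝ) 1)),
      Tendsto
        (fun n : ℕ => ∫ x, bfun (n * x) * f x * (starRingEnd ℂ) (g x)
          ∂(volume.restrict (Set.Ioo (0 : ℝ) 1))) atTop
        (nhds ((3 / 4 : ℂ) *
          ∫ x, f x * (starRingEnd ℂ) (g x) ∂(volume.restrict (Set.Ioo (0 : ℝ) 1))))) ∧
    (∀ f g : Lp ℂ 2 (volume.restrict (Set.Ioo (0 : ℝ) 1)),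
      Tendsto
        (fun n : ℕ => ∫ x, (bfun (n * x))⁻¹ * f x * (starRingEnd ℂ) (g x)
          ∂(volume.restrict (Set.Ioo (0 : ℝ) 1))) atTop
        (nhds ((3 / 2 : ℂ) *
          ∫ x, f x * (starRingEnd ℂ) (g x) ∂(volume.restrict (Set.Ioo (0 : ℝ) 1))))) ∧
    (3 / 2 : ℂ) ≠ (3 / 4 : ℂ)⁻¹ := by
  refine ⟨fun f g => ?_, fun f g => ?_, by norm_num⟩
  · exact wot bfun measurable_bfun (3/4) 2 bound_b anti_b f g
  · exact wot (fun x => (bfun x)⁻¹) measurable_bfun.inv (3/2) 2 bound_binv anti_binv f g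
end

section
/- Let H₀, H₁ be Hilbert spaces, B : dom(B) ⊆ H₀ → H₁ densely defined, closed, injective, with closed range. Let ι : range(B) ↪ H₁ be the inclusion and a ∈ L(H₁) satisfy Re⟨ι* a ι q, q⟩ ≥ α‖q‖² for all q ∈ range(B) and some α > 0. Then for every bounded conjugate-linear functional f on dom(B) (with graph norm) there exists a unique u ∈ dom(B) such that ⟨a Bu, Bv⟩ = f(v) for all v ∈ dom(B). -/
open scoped InnerProductSpace

/-- Lax–Milgram for divergence-form problems: if `B` is densely defined, closed, injective with
closed range, and `a` is coercive on `range B`, then for every bounded conjugate-linear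
functional `f` on `dom(B)` (graph norm) there is a unique `u ∈ dom(B)` with
`⟨a B u, B v⟩ = f v` for all `v ∈ dom(B)`. -/
theorem stmt8 {H₀ H₁ : Type*}
    [NormedAddCommGroup H₀] [InnerProductSpace ℂ H₀] [CompleteSpace H₀]
    [NormedAddCommGroup H₁] [InnerProductSpace ℂ H₁] [CompleteSpace H₁]
    (B : H₀ →ₗ.[ℂ] H₁) (hdense : Dense (B.domain : Set H₀)) (hclosed : B.IsClosed)
    (hinj : Function.Injective (⇑B : B.domain → H₁))
    (hrange : IsClosed (Set.range (⇑B : B.domain → H₁)))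
    (a : H₁ →L[ℂ] H₁) (α : ℝ) (hα : 0 < α)
    (hcoer : ∀ q ∈ Set.range (⇑B : B.domain → H₁), α * ‖q‖ ^ 2 ≤ (⟪a q, q⟫_ℂ).re)
    (f : B.domain → ℂ)
    (hf_add : ∀ u v : B.domain, f (u + v) = f u + f v)
    (hf_smul : ∀ (c : ℂ) (u : B.domain), f (c • u) = (starRingEnd ℂ) c * f u)
    (hf_bdd : ∃ C : ℝ, ∀ u : B.domain,
      ‖f u‖ ≤ C * Real.sqrt (‖(u : H₀)‖ ^ 2 + ‖B u‖ ^ 2)) :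
    ∃! u : B.domain, ∀ v : B.domain, ⟪B v, a (B u)⟫_ℂ = f v := by
  classical
  set E : Submodule ℂ H₁ := LinearMap.range B.toFun with hE
  have hEset : (E : Set H₁) = Set.range (⇑B : B.domain → H₁) := by
    ext x
    simp only [hE, SetLike.mem_coe, LinearMap.mem_range, Set.mem_range]
    rfl
  have hEclosed : IsClosed (E : Set H₁) := hEset ▸ hrange
  haveI : CompleteSpace E := hEclosed.completeSpace_coe
  -- the bijection dom B ≃ E
  have hinj' : Function.Injective (B.toFun.rangeRestrict) := by
    rw [LinearMap.injective_rangeRestrict_iff]; exact hinj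
  let e : B.domain ≃ₗ[ℂ] ↥E :=
    LinearEquiv.ofBijective B.toFun.rangeRestrict ⟨hinj', B.toFun.surjective_rangeRestrict⟩
  have hBe : ∀ d : B.domain, ((e d : ↥E) : H₁) = B d := fun d => rfl
  have hBes : ∀ q : ↥E, B (e.symm q) = (q : H₁) := by
    intro q
    rw [← hBe, e.apply_symm_apply]
  -- the inverse map E → H₀ is continuous (closed graph theorem)
  let S : ↥E →ₗ[ℂ] H₀ := B.domain.subtype.comp (e.symm : ↥E →ₗ[ℂ] B.domain)
  have hScont : Continuous S := by
    apply S.continuous_of_seq_closed_graph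
    intro u q x hu hx
    have hmem : ∀ n, ((S (u n) : H₀), ((u n : ↥E) : H₁)) ∈ B.graph := by
      intro n
      rw [LinearPMap.mem_graph_iff]
      exact ⟨e.symm (u n), rfl, hBes (u n)⟩
    have hlim : Filter.Tendsto (fun n => ((S (u n) : H₀), ((u n : ↥E) : H₁)))
        Filter.atTop (nhds (x, (q : H₁))) := by
      exact Filter.Tendsto.prodMk_nhds hx
        ((continuous_subtype_val.tendsto q).comp hu)
    have hxq : (x, (q : H₁)) ∈ B.graph :=
      hclosed.mem_of_tendsto hlim (Filter.Eventually.of_forall hmem)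
    rw [LinearPMap.mem_graph_iff] at hxq
    obtain ⟨d, hd1, hd2⟩ := hxq
    have : e.symm q = d := by
      apply hinj
      rw [hBes q, hd2]
    show x = (↑(e.symm q) : H₀)
    rw [this, hd1]
  let Sc : ↥E →L[ℂ] H₀ := ⟨S, hScont⟩
  -- the conjugate-linear functional transported to E, as a linear functional
  obtain ⟨C, hC⟩ := hf_bdd
  set C' : ℝ := max C 0 with hC'
  have hC'0 : 0 ≤ C' := le_max_right _ _
  have hC'' : ∀ u : B.domain,
      ‖f u‖ ≤ C' * Real.sqrt (‖(u : H₀)‖ ^ 2 + ‖B u‖ ^ 2) := by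
    intro u
    refine (hC u).trans ?_
    have := Real.sqrt_nonneg (‖(u : H₀)‖ ^ 2 + ‖B u‖ ^ 2)
    nlinarith [le_max_left C 0]
  let φ₀ : ↥E →ₗ[ℂ] ℂ :=
    { toFun := fun q => (starRingEnd ℂ) (f (e.symm q))
      map_add' := by intro p q; rw [map_add, hf_add, map_add]
      map_smul' := by
        intro c q
        rw [map_smul, hf_smul, map_mul, Complex.conj_conj]
        rfl }
  have hφ₀bdd : ∀ q : ↥E, ‖φ₀ q‖ ≤ (C' * Real.sqrt (‖Sc‖ ^ 2 + 1)) * ‖q‖ := by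
    intro q
    have h1 : ‖φ₀ q‖ = ‖f (e.symm q)‖ := by
      simp [φ₀]
    have h2 : ‖B (e.symm q)‖ = ‖q‖ := by rw [hBes]; rfl
    have h3 : ‖((e.symm q : B.domain) : H₀)‖ = ‖Sc q‖ := rfl
    have h4 : ‖Sc q‖ ≤ ‖Sc‖ * ‖q‖ := Sc.le_opNorm q
    have h5 : Real.sqrt (‖Sc q‖ ^ 2 + ‖q‖ ^ 2) ≤ Real.sqrt (‖Sc‖ ^ 2 + 1) * ‖q‖ := by
      have h6 : ‖Sc q‖ ^ 2 + ‖q‖ ^ 2 ≤ (‖Sc‖ ^ 2 + 1) * ‖q‖ ^ 2 := by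
        nlinarith [norm_nonneg (Sc q), norm_nonneg q, Sc.opNorm_nonneg]
      calc Real.sqrt (‖Sc q‖ ^ 2 + ‖q‖ ^ 2) ≤ Real.sqrt ((‖Sc‖ ^ 2 + 1) * ‖q‖ ^ 2) :=
            Real.sqrt_le_sqrt h6
        _ = Real.sqrt (‖Sc‖ ^ 2 + 1) * ‖q‖ := by
            rw [Real.sqrt_mul (by positivity), Real.sqrt_sq (norm_nonneg q)]
    calc ‖φ₀ q‖ = ‖f (e.symm q)‖ := h1
      _ ≤ C' * Real.sqrt (‖((e.symm q : B.domain) : H₀)‖ ^ 2 + ‖B (e.symm q)‖ ^ 2) := hC'' _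
      _ = C' * Real.sqrt (‖Sc q‖ ^ 2 + ‖q‖ ^ 2) := by rw [h2, h3]
      _ ≤ C' * (Real.sqrt (‖Sc‖ ^ 2 + 1) * ‖q‖) := by
          exact mul_le_mul_of_nonneg_left h5 hC'0
      _ = (C' * Real.sqrt (‖Sc‖ ^ 2 + 1)) * ‖q‖ := by ring
  let φ : ↥E →L[ℂ] ℂ := φ₀.mkContinuous _ hφ₀bdd
  have hφ : ∀ q : ↥E, φ q = (starRingEnd ℂ) (f (e.symm q)) := fun q => rfl
  -- Riesz representation
  let w : ↥E := (InnerProductSpace.toDual ℂ ↥E).symm φ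
  have hw : ∀ q : ↥E, ⟪w, q⟫_ℂ = φ q := fun q => InnerProductSpace.toDual_symm_apply
  -- the compressed operator A
  let A : ↥E →L[ℂ] ↥E := (E.orthogonalProjectionOnto).comp (a.comp E.subtypeL)
  have hAinner : ∀ p q : ↥E, ⟪(p : H₁), a (q : H₁)⟫_ℂ = ⟪p, A q⟫_ℂ := by
    intro p q
    have horth : ⟪a (q : H₁) - (E.orthogonalProjectionOnto (a (q : H₁)) : H₁), (p : H₁)⟫_ℂ = 0 :=
      Submodule.starProjection_inner_eq_zero (K := E) _ _ p.2
    have : ⟪(p : H₁), a (q : H₁) - (E.orthogonalProjectionOnto (a (q : H₁)) : H₁)⟫_ℂ = 0 := by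
      rw [← inner_conj_symm, horth, map_zero]
    rw [inner_sub_right] at this
    have hcoe : ⟪p, A q⟫_ℂ = ⟪(p : H₁), (E.orthogonalProjectionOnto (a (q : H₁)) : H₁)⟫_ℂ := rfl
    rw [hcoe]
    linear_combination this
  have hre : ∀ x y : ↥E, (⟪x, y⟫_ℂ).re = (⟪y, x⟫_ℂ).re := by
    intro x y
    rw [← inner_conj_symm, Complex.conj_re]
  have hre' : ∀ x y : H₁, (⟪x, y⟫_ℂ).re = (⟪y, x⟫_ℂ).re := by
    intro x y
    rw [← inner_conj_symm, Complex.conj_re]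
  have hAcoer : ∀ q : ↥E, α * ‖q‖ ^ 2 ≤ (⟪A q, q⟫_ℂ).re := by
    intro q
    have h1 : (⟪A q, q⟫_ℂ).re = (⟪q, A q⟫_ℂ).re := hre _ _
    have h2 : (⟪q, A q⟫_ℂ) = ⟪(q : H₁), a (q : H₁)⟫_ℂ := (hAinner q q).symm
    have h3 : (⟪(q : H₁), a (q : H₁)⟫_ℂ).re = (⟪a (q : H₁), (q : H₁)⟫_ℂ).re :=
      hre' _ _
    have h4 : α * ‖(q : H₁)‖ ^ 2 ≤ (⟪a (q : H₁), (q : H₁)⟫_ℂ).re := by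
      apply hcoer
      rw [← hEset]
      exact q.2
    rw [h1, h2, h3]
    simpa using h4
  have hAbelow : ∀ q : ↥E, α * ‖q‖ ≤ ‖A q‖ := by
    intro q
    rcases eq_or_ne q 0 with h | h
    · simp [h]
    · have hq : 0 < ‖q‖ := norm_pos_iff.mpr h
      have h1 : α * ‖q‖ ^ 2 ≤ (⟪A q, q⟫_ℂ).re := hAcoer q
      have h2 : (⟪A q, q⟫_ℂ).re ≤ ‖⟪A q, q⟫_ℂ‖ := Complex.re_le_norm _
      have h3 : ‖⟪A q, q⟫_ℂ‖ ≤ ‖A q‖ * ‖q‖ := norm_inner_le_norm _ _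
      nlinarith
  have hAinj : Function.Injective A := by
    intro p q h
    have := hAbelow (p - q)
    rw [map_sub, h, sub_self, norm_zero] at this
    have : ‖p - q‖ ≤ 0 := by nlinarith [norm_nonneg (p - q)]
    rwa [← sub_eq_zero, ← norm_le_zero_iff]
  have hAanti : AntilipschitzWith (⟨α, hα.le⟩ : NNReal)⁻¹ A := by
    apply A.antilipschitz_of_bound
    intro x
    have := hAbelow x
    show ‖x‖ ≤ α⁻¹ * ‖A x‖
    rw [inv_mul_eq_div, le_div_iff₀ hα, mul_comm]
    exact this
  have hRclosed : IsClosed ((LinearMap.range (A : ↥E →ₗ[ℂ] ↥E)) : Set ↥E) := by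
    have : Set.range (⇑A) = ((LinearMap.range (A : ↥E →ₗ[ℂ] ↥E)) : Set ↥E) := by
      ext x; simp
    rw [← this]
    exact hAanti.isClosed_range A.uniformContinuous
  haveI : CompleteSpace (LinearMap.range (A : ↥E →ₗ[ℂ] ↥E)) := hRclosed.completeSpace_coe
  have hAsurj : Function.Surjective A := by
    have htop : LinearMap.range (A : ↥E →ₗ[ℂ] ↥E) = ⊤ := by
      rw [← Submodule.orthogonal_eq_bot_iff, Submodule.eq_bot_iff]
      intro x hx
      rw [Submodule.mem_orthogonal] at hx
      have h0 : ⟪A x, x⟫_ℂ = 0 := hx (A x) (LinearMap.mem_range_self _ x)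
      have := hAcoer x
      rw [h0] at this
      simp only [Complex.zero_re] at this
      have h2 : ‖x‖ ^ 2 ≤ 0 := by nlinarith
      have h3 : ‖x‖ = 0 := by nlinarith [norm_nonneg x, sq_nonneg ‖x‖]
      rwa [norm_eq_zero] at h3
    intro y
    obtain ⟨x, hx⟩ := LinearMap.range_eq_top.mp htop y
    exact ⟨x, hx⟩
  obtain ⟨z, hz⟩ := hAsurj w
  -- conclusion
  refine ⟨e.symm z, ?_, ?_⟩
  · intro v
    have h1 : B (e.symm z) = (z : H₁) := hBes z
    have h2 : B v = ((e v : ↥E) : H₁) := (hBe v).symm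
    rw [h1, h2, hAinner (e v) z, hz, ← inner_conj_symm, hw, hφ, e.symm_apply_apply,
      Complex.conj_conj]
  · intro u' hu'
    have key : A (e u') = w := by
      apply ext_inner_left ℂ
      intro q
      rw [← hAinner q (e u'), hBe u', ← hBes q, hu' (e.symm q),
        ← inner_conj_symm, hw, hφ, Complex.conj_conj]
    have : e u' = z := hAinj (by rw [key, hz])
    rw [← this, e.symm_apply_apply]
end

section
/- Let H = H₀ ⊕ H₁ and suppose a, b ∈ L(H) with b boundedly invertible, b₀₀ boundedly invertible, and the compression (b⁻¹)₁₁ boundedly invertible. If b⁻¹ a π₀ = π₀ and a b⁻¹ π₁ = π₁, where π₀, π₁ are the orthogonal projections onto H₀ and H₁, then a = b. -/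
noncomputable section

variable {H : Type*} [NormedAddCommGroup H] [InnerProductSpace ℂ H] [CompleteSpace H]

/-- The `(i,j)` blocks of `a ∈ L(H)` with respect to `H = H₀ ⊕ H₁`. -/
def blk00 (H₀ : Submodule ℂ H) [Submodule.HasOrthogonalProjection H₀] (a : H →L[ℂ] H) : H₀ →L[ℂ] H₀ :=
  (Submodule.orthogonalProjectionOnto H₀).comp (a.comp H₀.subtypeL)

def blk01 (H₀ H₁ : Submodule ℂ H) [Submodule.HasOrthogonalProjection H₀] (a : H →L[ℂ] H) :
    H₁ →L[ℂ] H₀ :=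
  (Submodule.orthogonalProjectionOnto H₀).comp (a.comp H₁.subtypeL)

def blk10 (H₀ H₁ : Submodule ℂ H) [Submodule.HasOrthogonalProjection H₁] (a : H →L[ℂ] H) :
    H₀ →L[ℂ] H₁ :=
  (Submodule.orthogonalProjectionOnto H₁).comp (a.comp H₀.subtypeL)

def blk11 (H₁ : Submodule ℂ H) [Submodule.HasOrthogonalProjection H₁] (a : H →L[ℂ] H) : H₁ →L[ℂ] H₁ :=
  (Submodule.orthogonalProjectionOnto H₁).comp (a.comp H₁.subtypeL)

/-- The operator on `H` given by a `2 × 2` block matrix with respect to `H = H₀ ⊕ H₁`. -/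
def blkMat (H₀ H₁ : Submodule ℂ H) [Submodule.HasOrthogonalProjection H₀] [Submodule.HasOrthogonalProjection H₁]
    (c₀₀ : H₀ →L[ℂ] H₀) (c₀₁ : H₁ →L[ℂ] H₀) (c₁₀ : H₀ →L[ℂ] H₁) (c₁₁ : H₁ →L[ℂ] H₁) :
    H →L[ℂ] H :=
  H₀.subtypeL.comp (c₀₀.comp (Submodule.orthogonalProjectionOnto H₀)) +
    H₀.subtypeL.comp (c₀₁.comp (Submodule.orthogonalProjectionOnto H₁)) +
    H₁.subtypeL.comp (c₁₀.comp (Submodule.orthogonalProjectionOnto H₀)) +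
    H₁.subtypeL.comp (c₁₁.comp (Submodule.orthogonalProjectionOnto H₁))

/-- If `b` is boundedly invertible with `b₀₀` and `(b⁻¹)₁₁` boundedly invertible, and
`b⁻¹ a π₀ = π₀` and `a b⁻¹ π₁ = π₁`, then `a = b`. -/
theorem stmt13 (H₀ H₁ : Submodule ℂ H) [Submodule.HasOrthogonalProjection H₀]
    [Submodule.HasOrthogonalProjection H₁] (hcompl : H₁ = H₀ᗮ)
    (a b b' : H →L[ℂ] H)
    (hb₁ : b.comp b' = ContinuousLinearMap.id ℂ H)
    (hb₂ : b'.comp b = ContinuousLinearMap.id ℂ H)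
    (hb00 : IsUnit (blk00 H₀ b))
    (hbinv11 : IsUnit (blk11 H₁ b'))
    (hπ₀ : (b'.comp a).comp (H₀.subtypeL.comp (Submodule.orthogonalProjectionOnto H₀)) =
      H₀.subtypeL.comp (Submodule.orthogonalProjectionOnto H₀))
    (hπ₁ : (a.comp b').comp (H₁.subtypeL.comp (Submodule.orthogonalProjectionOnto H₁)) =
      H₁.subtypeL.comp (Submodule.orthogonalProjectionOnto H₁)) :
    a = b := by
  subst hcompl
  -- b' is a left inverse pointwise
  have hbb' : ∀ x : H, b (b' x) = x := fun x => ContinuousLinearMap.ext_iff.mp hb₁ x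
  -- a and b agree on H₀
  have hd0 : ∀ v : H₀, a (v : H) = b (v : H) := by
    intro v
    have h1 : b' (a (v : H)) = (v : H) := by
      have := ContinuousLinearMap.ext_iff.mp hπ₀ (v : H)
      simpa using this
    calc a (v : H) = b (b' (a (v : H))) := (hbb' _).symm
      _ = b (v : H) := by rw [h1]
  -- a and b agree on b' ↑z for z ∈ H₀ᗮ
  have hd1' : ∀ z : H₀ᗮ, a (b' (z : H)) = b (b' (z : H)) := by
    intro z
    have h1 : a (b' (z : H)) = (z : H) := by
      have := ContinuousLinearMap.ext_iff.mp hπ₁ (z : H)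
      simpa using this
    rw [h1, hbb']
  -- hence a and b agree on ↑(blk11 b' z)
  have hd1'' : ∀ z : H₀ᗮ, a ((blk11 H₀ᗮ b' z : H₀ᗮ) : H) = b ((blk11 H₀ᗮ b' z : H₀ᗮ) : H) := by
    intro z
    have hsplit : b' (z : H) = ((Submodule.orthogonalProjectionOnto H₀ (b' (z : H)) : H₀) : H)
        + ((Submodule.orthogonalProjectionOnto H₀ᗮ (b' (z : H)) : H₀ᗮ) : H) :=
      (Submodule.starProjection_add_starProjection_orthogonal (K := H₀) (b' (z : H))).symm
    have hblk : ((blk11 H₀ᗮ b' z : H₀ᗮ) : H)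
        = ((Submodule.orthogonalProjectionOnto H₀ᗮ (b' (z : H)) : H₀ᗮ) : H) := rfl
    have h2 := hd1' z
    rw [hsplit, map_add, map_add, hd0] at h2
    rw [hblk]
    exact add_left_cancel h2
  -- surjectivity of blk11 b' gives agreement on all of H₀ᗮ
  have hd1 : ∀ v : H₀ᗮ, a (v : H) = b (v : H) := by
    intro v
    obtain ⟨u, hu⟩ := hbinv11
    have h3 : blk11 H₀ᗮ b' ((↑u⁻¹ : H₀ᗮ →L[ℂ] H₀ᗮ) v) = v := by
      rw [← hu]
      have h4 : ((↑u * ↑u⁻¹ : H₀ᗮ →L[ℂ] H₀ᗮ)) v = v := by rw [u.mul_inv]; rfl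
      rw [ContinuousLinearMap.mul_apply] at h4
      exact h4
    have := hd1'' ((↑u⁻¹ : H₀ᗮ →L[ℂ] H₀ᗮ) v)
    rwa [h3] at this
  ext x
  have hx : x = ((Submodule.orthogonalProjectionOnto H₀ x : H₀) : H)
      + ((Submodule.orthogonalProjectionOnto H₀ᗮ x : H₀ᗮ) : H) :=
    (Submodule.starProjection_add_starProjection_orthogonal (K := H₀) x).symm
  calc a x = a (((Submodule.orthogonalProjectionOnto H₀ x : H₀) : H)
        + ((Submodule.orthogonalProjectionOnto H₀ᗮ x : H₀ᗮ) : H)) := by rw [← hx]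
    _ = b x := by rw [map_add, hd0, hd1, ← map_add, ← hx]


end
end

section
/- Let H = H₀ ⊕ H₁, a ∈ L(H) boundedly invertible with a₀₀ boundedly invertible, and let v, w ∈ H. Then w = a v holds if and only if π₀ w = π₀ a v and π₁ v = π₁ a⁻¹ w, where π₀, π₁ are the orthogonal projections onto H₀ and H₁. -/
noncomputable section

variable {H : Type*} [NormedAddCommGroup H] [InnerProductSpace ℂ H] [CompleteSpace H]

/-- For boundedly invertible `a` with boundedly invertible `a₀₀`, one has `w = a v` if and only
if `π₀ w = π₀ a v` and `π₁ v = π₁ a⁻¹ w`. -/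
theorem stmt14 (H₀ H₁ : Submodule ℂ H) [Submodule.HasOrthogonalProjection H₀]
    [Submodule.HasOrthogonalProjection H₁] (hcompl : H₁ = H₀ᗮ)
    (a a' : H →L[ℂ] H)
    (ha₁ : a.comp a' = ContinuousLinearMap.id ℂ H)
    (ha₂ : a'.comp a = ContinuousLinearMap.id ℂ H)
    (ha00 : IsUnit (blk00 H₀ a))
    (v w : H) :
    w = a v ↔
      (H₀.subtypeL (Submodule.orthogonalProjectionOnto H₀ w) = H₀.subtypeL (Submodule.orthogonalProjectionOnto H₀ (a v)) ∧
        H₁.subtypeL (Submodule.orthogonalProjectionOnto H₁ v) =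
          H₁.subtypeL (Submodule.orthogonalProjectionOnto H₁ (a' w))) := by
  have haw : ∀ u : H, a (a' u) = u := fun u => by
    have := ContinuousLinearMap.ext_iff.mp ha₁ u
    simpa using this
  have hwa : ∀ u : H, a' (a u) = u := fun u => by
    have := ContinuousLinearMap.ext_iff.mp ha₂ u
    simpa using this
  constructor
  · rintro rfl
    exact ⟨rfl, by rw [hwa v]⟩
  · rintro ⟨h0, h1⟩
    -- Let x = v - a' w.
    set x : H := v - a' w with hxdef
    have hπ1 : Submodule.orthogonalProjectionOnto H₁ v = Submodule.orthogonalProjectionOnto H₁ (a' w) :=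
      Subtype.coe_injective (by simpa using h1)
    have hx1 : Submodule.orthogonalProjectionOnto H₁ x = 0 := by
      simp [hxdef, map_sub, hπ1]
    have hxmem : x ∈ H₀ := by
      have : x ∈ H₁ᗮ := by
        rw [← Submodule.orthogonalProjectionOnto_eq_zero_iff]
        exact hx1
      rwa [hcompl, Submodule.orthogonal_orthogonal] at this
    -- a v - w = a x
    have hav : a v = w + a x := by
      have : v = a' w + x := by rw [hxdef]; abel
      rw [this, map_add, haw w]
    have hπ0ax : Submodule.orthogonalProjectionOnto H₀ (a x) = 0 := by
      have h0' : Submodule.orthogonalProjectionOnto H₀ w = Submodule.orthogonalProjectionOnto H₀ (a v) :=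
        Subtype.coe_injective (by simpa using h0)
      have := h0'
      rw [hav, map_add] at this
      have : Submodule.orthogonalProjectionOnto H₀ w =
          Submodule.orthogonalProjectionOnto H₀ w + Submodule.orthogonalProjectionOnto H₀ (a x) := this
      linear_combination (norm := abel) -this
    have hblk : blk00 H₀ a ⟨x, hxmem⟩ = 0 := by
      simpa [blk00] using hπ0ax
    obtain ⟨u, hu⟩ := ha00
    have hxz : (⟨x, hxmem⟩ : H₀) = 0 := by
      have h1' : (↑u⁻¹ * ↑u : H₀ →L[ℂ] H₀) = 1 := by
        exact u.inv_mul
      calc (⟨x, hxmem⟩ : H₀) = (↑u⁻¹ * ↑u : H₀ →L[ℂ] H₀) ⟨x, hxmem⟩ := by rw [h1']; rfl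
        _ = (↑u⁻¹ : H₀ →L[ℂ] H₀) ((↑u : H₀ →L[ℂ] H₀) ⟨x, hxmem⟩) := rfl
        _ = (↑u⁻¹ : H₀ →L[ℂ] H₀) 0 := by rw [hu, hblk]
        _ = 0 := map_zero _
    have hx0 : x = 0 := congrArg Subtype.val hxz
    rw [hav, hx0, map_zero, add_zero]

end
end

section
/- Let H be a Hilbert space, B : dom(B) ⊆ H → H skew-self-adjoint (B* = −B) with dom(B) ↪ H compact (with respect to the graph norm). Let (Tₙ)ₙ in L(H) with Re⟨Tₙ x, x⟩ ≥ c‖x‖² for all n, x and some c > 0, and suppose Tₙ → T in the weak operator topology. Then for every sequence (φₙ)ₙ converging weakly to φ in H, the solutions uₙ := (Tₙ + B)⁻¹ φₙ converge in norm to u := (T + B)⁻¹ φ. -/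
open scoped InnerProductSpace
open Filter

/-- Weakly bounded sequences in a Hilbert space are norm bounded. -/
lemma weak_bdd_aux {H : Type*} [NormedAddCommGroup H] [InnerProductSpace ℂ H] [CompleteSpace H]
    (f : ℕ → H) (h : ∀ y : H, ∃ C, ∀ n, ‖⟪f n, y⟫_ℂ‖ ≤ C) : ∃ C, 0 ≤ C ∧ ∀ n, ‖f n‖ ≤ C := by
  obtain ⟨C, hC⟩ := banach_steinhaus (g := fun n => innerSL ℂ (f n)) (by
    intro y
    obtain ⟨C, hC⟩ := h y
    exact ⟨C, fun n => hC n⟩)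
  refine ⟨max C 0, le_max_right _ _, fun n => ?_⟩
  have := hC n
  rw [innerSL_apply_norm] at this
  exact this.trans (le_max_left _ _)

/-- Let `B` be skew-self-adjoint with compactly embedded domain (graph norm), `(Tₙ)` uniformly
coercive and converging to `T` in the weak operator topology, and `φₙ ⇀ φ` weakly. Then the
solutions `uₙ` of `(Tₙ + B) uₙ = φₙ` converge in norm to the solution `u` of `(T + B) u = φ`. -/
theorem stmt15 {H : Type*} [NormedAddCommGroup H] [InnerProductSpace ℂ H] [CompleteSpace H]
    (B : H →ₗ.[ℂ] H) (hdense : Dense (B.domain : Set H))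
    (hskew : B.adjoint = -B)
    (hcompact : ∀ u : ℕ → B.domain,
      (∃ C : ℝ, ∀ n, ‖((u n : H))‖ ^ 2 + ‖B (u n)‖ ^ 2 ≤ C) →
      ∃ φ : ℕ → ℕ, StrictMono φ ∧ ∃ x : H,
        Tendsto (fun n => ((u (φ n) : H))) atTop (nhds x))
    (T : ℕ → H →L[ℂ] H) (T' : H →L[ℂ] H) (c : ℝ) (hc : 0 < c)
    (hcoer : ∀ n, ∀ x : H, c * ‖x‖ ^ 2 ≤ (⟪T n x, x⟫_ℂ).re)
    (hTconv : ∀ x y : H, Tendsto (fun n => ⟪T n x, y⟫_ℂ) atTop (nhds ⟪T' x, y⟫_ℂ))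
    (φ : ℕ → H) (φ' : H)
    (hφ : ∀ y : H, Tendsto (fun n => ⟪φ n, y⟫_ℂ) atTop (nhds ⟪φ', y⟫_ℂ))
    (u : ℕ → B.domain) (u' : B.domain)
    (hu : ∀ n, T n (u n : H) + B (u n) = φ n)
    (hu' : T' (u' : H) + B u' = φ') :
    Tendsto (fun n => ((u n : H))) atTop (nhds (u' : H)) := by
  -- skew symmetry of B on its domain
  have hfa := LinearPMap.adjoint_isFormalAdjoint hdense
  rw [hskew] at hfa
  have hBvw : ∀ v w : B.domain, ⟪B v, (w : H)⟫_ℂ = -⟪(v : H), B w⟫_ℂ := by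
    intro v w
    have h := hfa v w
    rw [LinearPMap.neg_apply, inner_neg_left] at h
    rw [← h, neg_neg]
  have hBre : ∀ v : B.domain, (⟪B v, (v : H)⟫_ℂ).re = 0 := by
    intro v
    have h : ⟪B v, (v : H)⟫_ℂ = -(starRingEnd ℂ) ⟪B v, (v : H)⟫_ℂ := by
      rw [inner_conj_symm]; exact hBvw v v
    have h2 := congrArg Complex.re h
    simp only [Complex.neg_re, Complex.conj_re] at h2
    linarith
  -- general coercivity estimate for S + B on the domain of B
  have key : ∀ (S : H →L[ℂ] H), (∀ z : H, c * ‖z‖ ^ 2 ≤ (⟪S z, z⟫_ℂ).re) →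
      ∀ v : B.domain, c * ‖(v : H)‖ ^ 2 ≤ ‖S (v : H) + B v‖ * ‖(v : H)‖ := by
    intro S hS v
    have h1 : (⟪S (v : H) + B v, (v : H)⟫_ℂ).re = (⟪S (v : H), (v : H)⟫_ℂ).re := by
      rw [inner_add_left, Complex.add_re, hBre v, add_zero]
    have h2 : (⟪S (v : H) + B v, (v : H)⟫_ℂ).re ≤ ‖S (v : H) + B v‖ * ‖(v : H)‖ :=
      le_trans (Complex.re_le_norm _) (by exact norm_inner_le_norm _ _)
    calc c * ‖(v : H)‖ ^ 2 ≤ (⟪S (v : H), (v : H)⟫_ℂ).re := hS _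
      _ = (⟪S (v : H) + B v, (v : H)⟫_ℂ).re := h1.symm
      _ ≤ _ := h2
  -- coercivity of the limit T'
  have hcoer' : ∀ z : H, c * ‖z‖ ^ 2 ≤ (⟪T' z, z⟫_ℂ).re := by
    intro z
    have ht : Tendsto (fun n => (⟪T n z, z⟫_ℂ).re) atTop (nhds (⟪T' z, z⟫_ℂ).re) :=
      (Complex.continuous_re.tendsto _).comp (hTconv z z)
    exact ge_of_tendsto' ht (fun n => hcoer n z)
  -- uniform bounds
  obtain ⟨Mφ, hMφ0, hMφ⟩ := weak_bdd_aux φ (fun y => by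
    obtain ⟨C, hC⟩ := ((hφ y).norm).bddAbove_range
    exact ⟨C, fun n => hC ⟨n, rfl⟩⟩)
  have hTx : ∀ x : H, ∃ C, ∀ n, ‖T n x‖ ≤ C := by
    intro x
    obtain ⟨C, _, hC⟩ := weak_bdd_aux (fun n => T n x) (fun y => by
      obtain ⟨C, hC⟩ := ((hTconv x y).norm).bddAbove_range
      exact ⟨C, fun n => hC ⟨n, rfl⟩⟩)
    exact ⟨C, hC⟩
  obtain ⟨MT, hMT⟩ := banach_steinhaus (g := T) hTx
  have hMT0 : 0 ≤ MT := le_trans (norm_nonneg _) (hMT 0)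
  -- bound on uₙ
  have hun : ∀ n, ‖(u n : H)‖ ≤ Mφ / c := by
    intro n
    have h := key (T n) (hcoer n) (u n)
    rw [hu n] at h
    have h2 : ‖φ n‖ * ‖(u n : H)‖ ≤ Mφ * ‖(u n : H)‖ :=
      mul_le_mul_of_nonneg_right (hMφ n) (norm_nonneg _)
    rw [le_div_iff₀ hc]
    nlinarith [norm_nonneg (u n : H)]
  -- bound on B uₙ
  have hBun : ∀ n, ‖B (u n)‖ ≤ Mφ + MT * (Mφ / c) := by
    intro n
    have h : B (u n) = φ n - T n (u n : H) := by
      have := hu n; rw [← this]; abel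
    rw [h]
    refine le_trans (norm_sub_le _ _) (add_le_add (hMφ n) ?_)
    refine le_trans ((T n).le_opNorm _) ?_
    exact mul_le_mul (hMT n) (hun n) (norm_nonneg _) hMT0
  -- identification of any strong cluster point via the weak formulation
  have hident : ∀ (m : ℕ → ℕ), Tendsto m atTop atTop → ∀ x : H,
      Tendsto (fun k => (u (m k) : H)) atTop (nhds x) → x = (u' : H) := by
    intro m hm x hseq
    -- limit identity
    have hlim : ∀ v : B.domain, ⟪T' x, (v : H)⟫_ℂ - ⟪x, B v⟫_ℂ = ⟪φ', (v : H)⟫_ℂ := by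
      intro v
      have h1 : ∀ k, ⟪T (m k) (u (m k) : H), (v : H)⟫_ℂ - ⟪(u (m k) : H), B v⟫_ℂ
          = ⟪φ (m k), (v : H)⟫_ℂ := by
        intro k
        have h := congrArg (fun z : H => ⟪z, (v : H)⟫_ℂ) (hu (m k))
        simp only [inner_add_left] at h
        rw [hBvw (u (m k)) v] at h
        linear_combination h
      have hrhs : Tendsto (fun k => ⟪φ (m k), (v : H)⟫_ℂ) atTop (nhds ⟪φ', (v : H)⟫_ℂ) :=
        (hφ (v : H)).comp hm
      have h2 : Tendsto (fun k => ⟪(u (m k) : H), B v⟫_ℂ) atTop (nhds ⟪x, B v⟫_ℂ) :=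
        hseq.inner tendsto_const_nhds
      have h3 : Tendsto (fun k => ⟪T (m k) (u (m k) : H), (v : H)⟫_ℂ) atTop
          (nhds ⟪T' x, (v : H)⟫_ℂ) := by
        have ha : Tendsto (fun k => ⟪T (m k) ((u (m k) : H) - x), (v : H)⟫_ℂ) atTop
            (nhds 0) := by
          apply squeeze_zero_norm (a := fun k => MT * ‖(u (m k) : H) - x‖ * ‖(v : H)‖)
          · intro k
            refine le_trans (norm_inner_le_norm _ _) ?_
            refine mul_le_mul_of_nonneg_right ?_ (norm_nonneg _)
            refine le_trans ((T (m k)).le_opNorm _) ?_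
            exact mul_le_mul_of_nonneg_right (hMT (m k)) (norm_nonneg _)
          · have : Tendsto (fun k => (u (m k) : H) - x) atTop (nhds (x - x)) :=
              hseq.sub tendsto_const_nhds
            rw [sub_self] at this
            have := ((this.norm.const_mul MT).mul_const ‖(v : H)‖)
            simpa using this
        have hb : Tendsto (fun k => ⟪T (m k) x, (v : H)⟫_ℂ) atTop
            (nhds ⟪T' x, (v : H)⟫_ℂ) := (hTconv x (v : H)).comp hm
        have hc' := ha.add hb
        rw [zero_add] at hc'
        have heq : (fun k => ⟪T (m k) ((u (m k) : H) - x), (v : H)⟫_ℂ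
            + ⟪T (m k) x, (v : H)⟫_ℂ)
            = fun k => ⟪T (m k) (u (m k) : H), (v : H)⟫_ℂ := by
          funext k
          rw [← inner_add_left, ← map_add]
          congr 2
          abel
        rwa [heq] at hc'
      have hrhs2 := hrhs
      rw [show (fun k => ⟪φ (m k), (v : H)⟫_ℂ)
          = fun k => ⟪T (m k) (u (m k) : H), (v : H)⟫_ℂ - ⟪(u (m k) : H), B v⟫_ℂ
          from funext fun k => (h1 k).symm] at hrhs2
      exact tendsto_nhds_unique (h3.sub h2) hrhs2
    -- x belongs to the domain of B
    have hxmem : x ∈ B.domain := by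
      have hmem : x ∈ B.adjoint.domain := by
        apply LinearPMap.mem_adjoint_domain_of_exists
        refine ⟨T' x - φ', fun v => ?_⟩
        rw [inner_sub_left]
        have := hlim v
        linear_combination this
      rw [hskew] at hmem
      exact hmem
    set xd : B.domain := ⟨x, hxmem⟩ with hxd
    have hBxd : B xd = φ' - T' x := by
      apply hdense.eq_of_inner_left ℂ
      intro v' hv'
      obtain ⟨v, rfl⟩ : ∃ v : B.domain, (v : H) = v' := ⟨⟨v', hv'⟩, rfl⟩
      rw [hBvw xd v]
      have hx : (xd : H) = x := rfl
      rw [hx]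
      have := hlim v
      rw [inner_sub_left]
      linear_combination this
    -- uniqueness
    have hdiff : T' ((xd : H) - (u' : H)) + B (xd - u') = 0 := by
      rw [map_sub, B.map_sub, hBxd]
      have hx : (xd : H) = x := rfl
      rw [hx, ← hu']
      abel
    have hzero := key T' hcoer' (xd - u')
    rw [show ((xd - u' : B.domain) : H) = (xd : H) - (u' : H) from rfl, hdiff] at hzero
    simp only [norm_zero, zero_mul] at hzero
    have hnz : x - (u' : H) = 0 := by
      have h0 : ‖x - (u' : H)‖ = 0 := by
        have hzero' : c * ‖x - (u' : H)‖ ^ 2 ≤ 0 := hzero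
        by_contra hne
        have hpos : 0 < ‖x - (u' : H)‖ := lt_of_le_of_ne (norm_nonneg _) (Ne.symm hne)
        have := mul_pos hc (pow_pos hpos 2)
        linarith
      exact norm_eq_zero.mp h0
    exact sub_eq_zero.mp hnz
  -- subsequence argument
  apply tendsto_of_subseq_tendsto
  intro ns hns
  obtain ⟨ψ, hψmono, x, hx⟩ := hcompact (fun k => u (ns k)) ⟨(Mφ / c) ^ 2 +
      (Mφ + MT * (Mφ / c)) ^ 2, fun k => add_le_add
        (pow_le_pow_left₀ (norm_nonneg _) (hun _) 2)
        (pow_le_pow_left₀ (norm_nonneg _) (hBun _) 2)⟩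
  refine ⟨ψ, ?_⟩
  have hm : Tendsto (ns ∘ ψ) atTop atTop := hns.comp hψmono.tendsto_atTop
  have hxe : x = (u' : H) := hident (ns ∘ ψ) hm x hx
  rw [hxe] at hx
  exact hx
end

section
/- Let H be a Hilbert space and B : dom(B) ⊆ H → H skew-self-adjoint with Re⟨T x, x⟩ ≥ c‖x‖² for a bounded operator T ∈ L(H) and some c > 0. Then T + B (with domain dom(B)) is boundedly invertible and ‖(T + B)⁻¹‖ ≤ 1/c. -/
open scoped InnerProductSpace

/-- If `B` is skew-self-adjoint and `T` is bounded with `Re ⟪T x, x⟫ ≥ c ‖x‖²`, then `T + B`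
(with domain `dom B`) is boundedly invertible with `‖(T + B)⁻¹‖ ≤ 1/c`. -/
theorem stmt16 {H : Type*} [NormedAddCommGroup H] [InnerProductSpace ℂ H] [CompleteSpace H]
    (B : H →ₗ.[ℂ] H) (hdense : Dense (B.domain : Set H))
    (hskew : B.adjoint = -B)
    (T : H →L[ℂ] H) (c : ℝ) (hc : 0 < c)
    (hcoer : ∀ x : H, c * ‖x‖ ^ 2 ≤ (⟪T x, x⟫_ℂ).re) :
    Function.Bijective (fun u : B.domain => T (u : H) + B u) ∧
      ∀ u : B.domain, c * ‖(u : H)‖ ≤ ‖T (u : H) + B u‖ := by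
  classical
  have hBadj := LinearPMap.adjoint_isFormalAdjoint hdense
  have hle : -B ≤ B.adjoint := le_of_eq hskew.symm
  have hdom : ∀ u : B.domain, (u : H) ∈ B.adjoint.domain := fun u => hle.1 u.2
  have hval : ∀ u : B.domain, B.adjoint ⟨(u : H), hdom u⟩ = -(B u) := by
    intro u
    have h := hle.2 (x := ⟨(u : H), u.2⟩) (y := ⟨(u : H), hdom u⟩) rfl
    rw [← h, LinearPMap.neg_apply]
    exact congrArg (fun t : B.domain => -(B t)) (Subtype.ext rfl)
  have key : ∀ u x : B.domain, ⟪(B u : H), (x : H)⟫_ℂ = -⟪(u : H), (B x : H)⟫_ℂ := by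
    intro u x
    have h := hBadj ⟨(u : H), hdom u⟩ x
    rw [hval u, inner_neg_left] at h
    exact neg_eq_iff_eq_neg.mp h
  have reBzero : ∀ u : B.domain, (⟪(B u : H), (u : H)⟫_ℂ).re = 0 := by
    intro u
    have h := key u u
    have h2 : ⟪((u : H)), (B u : H)⟫_ℂ = (starRingEnd ℂ) ⟪(B u : H), (u : H)⟫_ℂ :=
      (inner_conj_symm _ _).symm
    rw [h2] at h
    have h3 := congrArg Complex.re h
    simp only [Complex.neg_re, Complex.conj_re] at h3
    linarith
  have hlow : ∀ u : B.domain, c * ‖(u : H)‖ ≤ ‖T (u : H) + B u‖ := by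
    intro u
    rcases eq_or_lt_of_le (norm_nonneg (u : H)) with h0 | h0
    · rw [← h0, mul_zero]; exact norm_nonneg _
    · have h1 : c * ‖(u : H)‖ ^ 2 ≤ (⟪T (u : H) + (B u : H), (u : H)⟫_ℂ).re := by
        rw [inner_add_left, Complex.add_re, reBzero u, add_zero]
        exact hcoer u
      have h2 : (⟪T (u : H) + (B u : H), (u : H)⟫_ℂ).re
          ≤ ‖T (u : H) + (B u : H)‖ * ‖(u : H)‖ := by
        calc (⟪T (u : H) + (B u : H), (u : H)⟫_ℂ).re
            ≤ ‖⟪T (u : H) + (B u : H), (u : H)⟫_ℂ‖ := Complex.re_le_norm _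
          _ ≤ _ := norm_inner_le_norm _ _
      nlinarith
  set L : B.domain →ₗ[ℂ] H := (T.toLinearMap.comp B.domain.subtype) + B.toFun with hLdef
  have hLapp : ∀ u : B.domain, L u = T (u : H) + B u := fun u => rfl
  have hlowL : ∀ u : B.domain, c * ‖(u : H)‖ ≤ ‖L u‖ := fun u => by
    rw [hLapp]; exact hlow u
  refine ⟨⟨?_, ?_⟩, hlow⟩
  · -- injective
    intro u v huv
    have huv' : L u = L v := huv
    have hz : L (u - v) = 0 := by rw [map_sub, huv', sub_self]
    have h2 := hlowL (u - v)
    rw [hz, norm_zero] at h2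
    have h3 : ‖((u - v : B.domain) : H)‖ = 0 := le_antisymm (by nlinarith) (norm_nonneg _)
    have h4 : ((u : H) - (v : H)) = 0 := by
      rwa [norm_eq_zero, Submodule.coe_sub] at h3
    exact Subtype.ext (sub_eq_zero.mp h4)
  · -- surjective
    set M : Submodule ℂ H := LinearMap.range L with hMdef
    -- closedness of the range
    have hclosed : IsClosed (M : Set H) := by
      apply IsSeqClosed.isClosed
      intro f f₀ hf hf₀
      choose u hu using hf
      have hcf : CauchySeq f := hf₀.cauchySeq
      have hcu : CauchySeq (fun n => ((u n : H))) := by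
        rw [Metric.cauchySeq_iff] at hcf ⊢
        intro ε hε
        obtain ⟨N, hN⟩ := hcf (c * ε) (by positivity)
        refine ⟨N, fun m hm n hn => ?_⟩
        have h1 := hlowL (u m - u n)
        rw [map_sub, hu, hu] at h1
        simp only [dist_eq_norm] at hN ⊢
        have hmn := hN m hm n hn
        simp only [Submodule.coe_sub] at h1
        nlinarith
      obtain ⟨x, hx⟩ := cauchySeq_tendsto_of_complete hcu
      have hTu : Filter.Tendsto (fun n => T ((u n : H))) Filter.atTop (nhds (T x)) :=
        (T.continuous.tendsto x).comp hx
      have hBu : Filter.Tendsto (fun n => (B (u n) : H)) Filter.atTop (nhds (f₀ - T x)) := by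
        have heq : (fun n => (B (u n) : H)) = fun n => f n - T ((u n : H)) := by
          funext n
          rw [← hu n, hLapp]
          abel
        rw [heq]
        exact hf₀.sub hTu
      have hinner : ∀ y : B.domain, ⟪T x - f₀, (y : H)⟫_ℂ = ⟪x, (B y : H)⟫_ℂ := by
        intro y
        have h1 : Filter.Tendsto (fun n => ⟪((u n : H)), (B y : H)⟫_ℂ) Filter.atTop
            (nhds ⟪x, (B y : H)⟫_ℂ) := Filter.Tendsto.inner (𝕜 := ℂ) hx tendsto_const_nhds
        have h2 : Filter.Tendsto (fun n => ⟪((u n : H)), (B y : H)⟫_ℂ) Filter.atTop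
            (nhds ⟪T x - f₀, (y : H)⟫_ℂ) := by
          have heq : (fun n => ⟪((u n : H)), (B y : H)⟫_ℂ)
              = fun n => -⟪(B (u n) : H), (y : H)⟫_ℂ := by
            funext n
            rw [key (u n) y, neg_neg]
          have h3 := (Filter.Tendsto.inner (𝕜 := ℂ) hBu (tendsto_const_nhds (x := (y : H)))).neg
          have h4 : -⟪f₀ - T x, (y : H)⟫_ℂ = ⟪T x - f₀, (y : H)⟫_ℂ := by
            rw [← inner_neg_left, neg_sub]
          rw [heq, ← h4]
          exact h3
        exact tendsto_nhds_unique h2 h1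
      have hxadj : x ∈ B.adjoint.domain :=
        LinearPMap.mem_adjoint_domain_of_exists x ⟨T x - f₀, hinner⟩
      have hxB : x ∈ B.domain := by
        have hd : B.adjoint.domain = B.domain := by rw [hskew]; rfl
        rwa [← hd]
      have h1 : B.adjoint ⟨x, hxadj⟩ = T x - f₀ :=
        LinearPMap.adjoint_apply_eq hdense _ hinner
      have h2 : B.adjoint ⟨x, hxadj⟩ = -(B ⟨x, hxB⟩) := hval ⟨x, hxB⟩
      have hBx : (B ⟨x, hxB⟩ : H) = f₀ - T x := by
        have h5 : -(B ⟨x, hxB⟩ : H) = T x - f₀ := h2.symm.trans h1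
        rw [← neg_sub, ← h5, neg_neg]
      refine ⟨⟨x, hxB⟩, ?_⟩
      rw [hLapp, hBx]
      abel
    -- dense range
    haveI : CompleteSpace M := hclosed.completeSpace_coe
    have horth : Mᗮ = ⊥ := by
      rw [Submodule.eq_bot_iff]
      intro v hv
      have hv' : ∀ u : B.domain, ⟪T (u : H) + (B u : H), v⟫_ℂ = 0 := by
        intro u
        exact (Submodule.mem_orthogonal M v).mp hv _ ⟨u, (hLapp u)⟩
      have hinner : ∀ u : B.domain,
          ⟪-(ContinuousLinearMap.adjoint T v), (u : H)⟫_ℂ = ⟪v, (B u : H)⟫_ℂ := by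
        intro u
        have h1 := hv' u
        rw [inner_add_left] at h1
        have h2 : ⟪(B u : H), v⟫_ℂ = -⟪T (u : H), v⟫_ℂ := by linear_combination h1
        calc ⟪-(ContinuousLinearMap.adjoint T v), (u : H)⟫_ℂ
            = -⟪ContinuousLinearMap.adjoint T v, (u : H)⟫_ℂ := by rw [inner_neg_left]
          _ = -⟪v, T (u : H)⟫_ℂ := by rw [ContinuousLinearMap.adjoint_inner_left]
          _ = -(starRingEnd ℂ) ⟪T (u : H), v⟫_ℂ := by rw [inner_conj_symm]
          _ = (starRingEnd ℂ) (-⟪T (u : H), v⟫_ℂ) := by rw [map_neg]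
          _ = (starRingEnd ℂ) ⟪(B u : H), v⟫_ℂ := by rw [h2]
          _ = ⟪v, (B u : H)⟫_ℂ := inner_conj_symm _ _
      have hvadj : v ∈ B.adjoint.domain :=
        LinearPMap.mem_adjoint_domain_of_exists v ⟨_, hinner⟩
      have hvB : v ∈ B.domain := by
        have hd : B.adjoint.domain = B.domain := by rw [hskew]; rfl
        rwa [← hd]
      have h3 : B.adjoint ⟨v, hvadj⟩ = -(ContinuousLinearMap.adjoint T v) :=
        LinearPMap.adjoint_apply_eq hdense _ hinner
      have h4 : B.adjoint ⟨v, hvadj⟩ = -(B ⟨v, hvB⟩) := hval ⟨v, hvB⟩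
      have h5 : (B ⟨v, hvB⟩ : H) = ContinuousLinearMap.adjoint T v :=
        (neg_injective (h3.symm.trans h4)).symm
      have h6 := reBzero ⟨v, hvB⟩
      rw [h5] at h6
      have h7 : ⟪(ContinuousLinearMap.adjoint T v : H), v⟫_ℂ = (starRingEnd ℂ) ⟪T v, v⟫_ℂ := by
        rw [ContinuousLinearMap.adjoint_inner_left, inner_conj_symm]
      rw [h7] at h6
      simp only [Complex.conj_re] at h6
      have h8 := hcoer v
      have h9 : ‖v‖ ^ 2 = 0 := le_antisymm (by nlinarith) (by positivity)
      have h10 : ‖v‖ = 0 := by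
        have := sq_eq_zero_iff.mp h9
        exact this
      rwa [norm_eq_zero] at h10
    have hM : M = ⊤ := Submodule.orthogonal_eq_bot_iff.mp horth
    intro f
    have hf : f ∈ M := hM ▸ Submodule.mem_top
    obtain ⟨w, hw⟩ := hf
    exact ⟨w, hw⟩
end
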